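/- Let p > 1, a ∈ ℝ, and let v be the solution of v'' = |v|^{p-1} v log^a(2+v²) with v(0) = A > 0, v'(0) = B > 0, blowing up at time T < ∞. Then v(t) ∼ κ_a (T−t)^{−2/(p−1)} |log(T−t)|^{−a/(p−1)} as t → T, where κ_a = (2^{1−2a}(p+1)/(p−1)^{2−a})^{1/(p−1)}. -/

import Mathlib

open Real Set Filter Topology

namespace S11


/-- squeeze to 1 helper -/
lemma squeeze_to_one {α : Type*} {l : Filter α} {f : α → ℝ}
    (h : ∀ ε : ℝ, 0 < ε → ε < 1 → ∀ᶠ x in l, 1 - ε ≤ f x ∧ f x ≤ 1 + ε) :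
    Tendsto f l (𝓝 1) := by
  rw [Metric.tendsto_nhds]
  intro ε hε
  have h' := h (min (ε/2) (1/2)) (lt_min (by linarith) (by norm_num)) 
    (lt_of_le_of_lt (min_le_right _ _) (by norm_num))
  filter_upwards [h'] with x hx
  rw [Real.dist_eq, abs_sub_lt_iff]
  have h1 := min_le_left (ε/2) (1/2)
  constructor <;> nlinarith [hx.1, hx.2]

/-- (log y)^a / y^c → 0 -/
lemma rpow_neg_mul_log_rpow_zero {c : ℝ} (a : ℝ) (hc : 0 < c) :
    Tendsto (fun y : ℝ => y ^ (-c) * Real.log y ^ a) atTop (𝓝 0) := by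
  have h := (isLittleO_log_rpow_rpow_atTop a hc).tendsto_div_nhds_zero
  refine h.congr' ?_
  filter_upwards [eventually_gt_atTop (0:ℝ)] with y hy
  rw [Real.rpow_neg hy.le]
  ring

lemma rpow_mul_log_rpow_atTop {c : ℝ} (a : ℝ) (hc : 0 < c) :
    Tendsto (fun y : ℝ => y ^ c * Real.log y ^ a) atTop atTop := by
  have h := rpow_neg_mul_log_rpow_zero (-a) hc
  have hpos : ∀ᶠ y in atTop, 0 < y ^ (-c) * Real.log y ^ (-a) := by
    filter_upwards [eventually_gt_atTop (1:ℝ)] with y hy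
    have : 0 < Real.log y := Real.log_pos hy
    positivity
  have h0 : Tendsto (fun y : ℝ => y ^ (-c) * Real.log y ^ (-a)) atTop (𝓝[>] 0) :=
    tendsto_nhdsWithin_of_tendsto_nhds_of_eventually_within _ h hpos
  have := h0.inv_tendsto_nhdsGT_zero
  refine this.congr' ?_
  filter_upwards [eventually_gt_atTop (1:ℝ)] with y hy
  have hl : 0 < Real.log y := Real.log_pos hy
  rw [Pi.inv_apply, mul_inv, ← Real.rpow_neg (le_of_lt (lt_trans one_pos hy)), 
    ← Real.rpow_neg hl.le, neg_neg, neg_neg]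


noncomputable def LL (x : ℝ) : ℝ := Real.log (2 + x ^ 2)

lemma logpos (x : ℝ) : 0 < LL x := by
  have : (1:ℝ) < 2 + x ^ 2 := by nlinarith [sq_nonneg x]
  exact Real.log_pos this

lemma hasDerivAt_LL (y : ℝ) : HasDerivAt LL (2 * y / (2 + y ^ 2)) y := by
  have h2 : (0:ℝ) < 2 + y ^ 2 := by positivity
  have hin : HasDerivAt (fun y : ℝ => 2 + y ^ 2) (2 * y) y := by
    simpa using (hasDerivAt_pow 2 y).const_add 2
  have := (Real.hasDerivAt_log h2.ne').comp y hin
  have h' : HasDerivAt (fun x => Real.log (2 + x ^ 2)) ((2 + y ^ 2)⁻¹ * (2 * y)) y := by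
    simpa [Function.comp_def] using this
  rw [div_eq_inv_mul]
  exact h'

noncomputable def Hn (p a y : ℝ) : ℝ := y ^ (p + 1) * LL y ^ a / (p + 1)

noncomputable def ee (p a y : ℝ) : ℝ := 2 * a * y ^ 2 / ((p + 1) * (2 + y ^ 2) * LL y)

noncomputable def od (p a x : ℝ) : ℝ := |x| ^ (p - 1) * x * (Real.log (2 + x ^ 2)) ^ a

lemma od_eq (p a : ℝ) {x : ℝ} (hx : 0 < x) :
    od p a x = x ^ p * LL x ^ a := by
  unfold od LL
  rw [abs_of_pos hx]
  rw [show x ^ (p-1) * x = x ^ p by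
    nth_rewrite 2 [show x = x ^ (1:ℝ) by rw [Real.rpow_one]]
    rw [← Real.rpow_add hx]; norm_num]

lemma hasDerivAt_Hn (p a : ℝ) (hp : 1 < p) {y : ℝ} (hy : 0 < y) :
    HasDerivAt (Hn p a) (od p a y * (1 + ee p a y)) y := by
  have hL := logpos y
  have h2 : (0:ℝ) < 2 + y ^ 2 := by positivity
  have h1 : HasDerivAt (fun y : ℝ => y ^ (p + 1)) ((p + 1) * y ^ p) y := by
    have := Real.hasDerivAt_rpow_const (x := y) (p := p + 1) (Or.inl hy.ne')
    simpa using this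
  have h2' : HasDerivAt (fun y : ℝ => LL y ^ a) (a * LL y ^ (a - 1) * (2 * y / (2 + y ^ 2))) y := by
    have hout := Real.hasDerivAt_rpow_const (x := LL y) (p := a) (Or.inl hL.ne')
    exact hout.comp y (hasDerivAt_LL y)
  have hmul := (h1.mul h2').div_const (p + 1)
  refine hmul.congr_deriv (Eq.symm ?_)
  rw [od_eq p a hy]
  unfold ee
  have hyp1 : y ^ (p + 1) = y ^ p * y := by
    rw [Real.rpow_add hy, Real.rpow_one]
  have hLa : LL y ^ (a - 1) = LL y ^ a / LL y := by
    rw [Real.rpow_sub hL, Real.rpow_one]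
  rw [hyp1, hLa]
  have hp1 : (p:ℝ) + 1 ≠ 0 := by linarith
  field_simp

lemma ee_tendsto (p a : ℝ) (hp : 1 < p) : Tendsto (ee p a) atTop (𝓝 0) := by
  have hL : Tendsto LL atTop atTop := by
    apply Real.tendsto_log_atTop.comp
    have : Tendsto (fun y : ℝ => y ^ 2) atTop atTop := tendsto_pow_atTop (by norm_num)
    exact tendsto_atTop_add_const_left atTop 2 this
  have h1 : Tendsto (fun y : ℝ => (LL y)⁻¹) atTop (𝓝 0) := hL.inv_tendsto_atTop
  have h2 : Tendsto (fun y : ℝ => y ^ 2 / (2 + y ^ 2)) atTop (𝓝 1) := by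
    have ha : Tendsto (fun y : ℝ => 2 / (2 + y ^ 2)) atTop (𝓝 0) := by
      apply Tendsto.div_atTop tendsto_const_nhds
      have : Tendsto (fun y : ℝ => y ^ 2) atTop atTop := tendsto_pow_atTop (by norm_num)
      exact tendsto_atTop_add_const_left atTop 2 this
    have := ha.const_sub 1
    rw [sub_zero] at this
    refine this.congr' ?_
    filter_upwards [eventually_gt_atTop (0:ℝ)] with y hy
    have h2 : (0:ℝ) < 2 + y ^ 2 := by positivity
    field_simp
    ring
  have := ((h2.const_mul (2 * a / (p + 1))).mul h1)
  rw [mul_zero] at this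
  refine this.congr' ?_
  filter_upwards [] with y
  unfold ee
  rw [div_eq_mul_inv, div_eq_mul_inv, div_eq_mul_inv, mul_inv, mul_inv]
  ring

lemma Hn_atTop (p a : ℝ) (hp : 1 < p) : Tendsto (Hn p a) atTop atTop := by
  set m : ℝ := min 1 ((3:ℝ) ^ a) with hm
  have hmpos : 0 < m := lt_min one_pos (Real.rpow_pos_of_pos (by norm_num) a)
  have hbase : Tendsto (fun y : ℝ => m / (p + 1) * (y ^ (p + 1) * Real.log y ^ a)) atTop atTop := by
    apply Tendsto.const_mul_atTop (by positivity)
    exact rpow_mul_log_rpow_atTop a (by linarith)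
  apply tendsto_atTop_mono' _ _ hbase
  filter_upwards [eventually_ge_atTop (3:ℝ)] with y hy3
  have hy : (0:ℝ) < y := by linarith
  have hly : (1:ℝ) ≤ Real.log y := by
    rw [show (1:ℝ) = Real.log (Real.exp 1) by simp]
    apply Real.log_le_log (Real.exp_pos 1)
    calc Real.exp 1 ≤ 3 := by
          have := Real.exp_one_lt_d9
          linarith
      _ ≤ y := hy3
  have hlypos : (0:ℝ) < Real.log y := by linarith
  have hLlow : Real.log y ≤ LL y := by
    unfold LL
    apply Real.log_le_log hy
    nlinarith
  have hLhigh : LL y ≤ 3 * Real.log y := by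
    unfold LL
    have h1 : (2:ℝ) + y ^ 2 ≤ y ^ 3 := by nlinarith
    calc Real.log (2 + y ^ 2) ≤ Real.log (y ^ 3) := Real.log_le_log (by positivity) h1
      _ = 3 * Real.log y := by rw [Real.log_pow]; push_cast; ring
  have key : m * Real.log y ^ a ≤ LL y ^ a := by
    rcases le_or_gt 0 a with ha | ha
    · calc m * Real.log y ^ a ≤ 1 * Real.log y ^ a := by
            apply mul_le_mul_of_nonneg_right (min_le_left _ _)
            exact (Real.rpow_pos_of_pos hlypos a).le
        _ = Real.log y ^ a := one_mul _
        _ ≤ LL y ^ a := Real.rpow_le_rpow hlypos.le hLlow ha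
    · calc m * Real.log y ^ a ≤ (3:ℝ) ^ a * Real.log y ^ a := by
            apply mul_le_mul_of_nonneg_right (min_le_right _ _)
            exact (Real.rpow_pos_of_pos hlypos a).le
        _ = (3 * Real.log y) ^ a := (Real.mul_rpow (by norm_num) hlypos.le).symm
        _ ≤ LL y ^ a := Real.rpow_le_rpow_of_nonpos (by linarith) hLhigh ha.le
  unfold Hn
  rw [div_eq_mul_inv, div_eq_mul_inv]
  have hyp : (0:ℝ) ≤ y ^ (p + 1) := (Real.rpow_pos_of_pos hy _).le
  have hp1 : (0:ℝ) < ((p:ℝ)+1)⁻¹ := by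
    rw [inv_pos]; linarith
  calc m * (p+1)⁻¹ * (y ^ (p + 1) * Real.log y ^ a) 
      = y ^ (p+1) * (m * Real.log y ^ a) * (p+1)⁻¹ := by ring
    _ ≤ y ^ (p + 1) * LL y ^ a * (p + 1)⁻¹ := by
        apply mul_le_mul_of_nonneg_right _ hp1.le
        exact mul_le_mul_of_nonneg_left key hyp

lemma od_cont (p a : ℝ) (hp : 1 < p) : Continuous (od p a) := by
  apply Continuous.mul
  · apply Continuous.mul
    · exact continuous_abs.rpow_const (fun x => Or.inr (by linarith))
    · exact continuous_id
  · apply ContinuousOn.comp_continuous (f := fun x : ℝ => Real.log (2 + x ^ 2)) 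
      (g := fun y : ℝ => y ^ a) (s := Ioi 0)
    · exact fun y hy => (Real.continuousAt_rpow_const y a (Or.inl (ne_of_gt hy))).continuousWithinAt
    · exact Continuous.log (by fun_prop) (fun x => by positivity)
    · exact fun x => logpos x

lemma od_pos (p a : ℝ) {x : ℝ} (hx : 0 < x) : 0 < od p a x := by
  unfold od
  have h1 : (0:ℝ) < |x| ^ (p - 1) := Real.rpow_pos_of_pos (abs_pos.2 hx.ne') _
  have h2 := logpos x
  positivity

noncomputable def Fa (p a x : ℝ) : ℝ := ∫ s in (0:ℝ)..x, od p a s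

lemma hasDerivAt_Fa (p a : ℝ) (hp : 1 < p) (x : ℝ) :
    HasDerivAt (Fa p a) (od p a x) x :=
  ((od_cont p a hp).integral_hasStrictDerivAt 0 x).hasDerivAt


lemma Fa_div_Hn (p a : ℝ) (hp : 1 < p) :
    Tendsto (fun y => Fa p a y / Hn p a y) atTop (𝓝 1) := by
  apply squeeze_to_one
  intro ε hε hε1
  set δ : ℝ := ε / 4 with hδdef
  have hδ0 : 0 < δ := by positivity
  have hδ1 : δ < 1 / 2 := by rw [hδdef]; linarith
  have hev : ∀ᶠ y in atTop, |ee p a y| ≤ δ ∧ 1 ≤ y := by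
    have h1 := Metric.tendsto_nhds.1 (ee_tendsto p a hp) δ hδ0
    filter_upwards [h1, eventually_ge_atTop (1:ℝ)] with y hy hy1
    rw [Real.dist_eq, sub_zero] at hy
    exact ⟨hy.le, hy1⟩
  obtain ⟨M0, hM0⟩ := eventually_atTop.1 hev
  set M := max M0 1 with hMdef
  have hM : ∀ b ≥ M, |ee p a b| ≤ δ ∧ 1 ≤ b := fun b hb => hM0 b (le_trans (le_max_left _ _) hb)
  have hM1 : (1:ℝ) ≤ M := le_max_right _ _
  have hderiv : ∀ x ∈ Ici M, 0 < x ∧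
      HasDerivAt (fun x => Hn p a x) (od p a x * (1 + ee p a x)) x ∧
      HasDerivAt (fun x => Fa p a x) (od p a x) x := by
    intro x hx
    have hx0 : (0:ℝ) < x := lt_of_lt_of_le one_pos (hM1.trans hx)
    exact ⟨hx0, hasDerivAt_Hn p a hp hx0, hasDerivAt_Fa p a hp x⟩
  have mono1 : MonotoneOn (fun x => Hn p a x - (1 - δ) * Fa p a x) (Ici M) := by
    apply monotoneOn_of_deriv_nonneg (convex_Ici M)
    · intro x hx
      obtain ⟨hx0, hH, hF⟩ := hderiv x hx
      exact (hH.sub ((hF.const_mul (1 - δ)))).continuousAt.continuousWithinAt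
    · rw [interior_Ici]
      intro x hx
      obtain ⟨hx0, hH, hF⟩ := hderiv x (mem_Ici.2 (le_of_lt (mem_Ioi.1 hx)))
      exact (hH.sub ((hF.const_mul (1 - δ)))).differentiableAt.differentiableWithinAt
    · rw [interior_Ici]
      intro x hx
      obtain ⟨hx0, hH, hF⟩ := hderiv x (mem_Ici.2 (le_of_lt (mem_Ioi.1 hx)))
      rw [HasDerivAt.deriv (f := fun x => Hn p a x - (1 - δ) * Fa p a x) (hH.sub ((hF.const_mul (1 - δ))))]
      have hod := od_pos p a hx0
      have hee := abs_le.1 (hM x (le_of_lt hx)).1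
      nlinarith [hee.1, hee.2]
  have mono2 : MonotoneOn (fun x => (1 + δ) * Fa p a x - Hn p a x) (Ici M) := by
    apply monotoneOn_of_deriv_nonneg (convex_Ici M)
    · intro x hx
      obtain ⟨hx0, hH, hF⟩ := hderiv x hx
      exact ((hF.const_mul (1 + δ)).sub hH).continuousAt.continuousWithinAt
    · rw [interior_Ici]
      intro x hx
      obtain ⟨hx0, hH, hF⟩ := hderiv x (mem_Ici.2 (le_of_lt (mem_Ioi.1 hx)))
      exact ((hF.const_mul (1 + δ)).sub hH).differentiableAt.differentiableWithinAt
    · rw [interior_Ici]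
      intro x hx
      obtain ⟨hx0, hH, hF⟩ := hderiv x (mem_Ici.2 (le_of_lt (mem_Ioi.1 hx)))
      rw [HasDerivAt.deriv (f := fun x => (1 + δ) * Fa p a x - Hn p a x) ((hF.const_mul (1 + δ)).sub hH)]
      have hod := od_pos p a hx0
      have hee := abs_le.1 (hM x (le_of_lt hx)).1
      nlinarith [hee.1, hee.2]
  set C1 : ℝ := Hn p a M - (1 - δ) * Fa p a M with hC1
  set C2 : ℝ := (1 + δ) * Fa p a M - Hn p a M with hC2
  have hHn := Hn_atTop p a hp
  have hrem : ∀ C : ℝ, Tendsto (fun x => C / Hn p a x) atTop (𝓝 0) := fun C =>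
    Tendsto.div_atTop tendsto_const_nhds hHn
  have hsmall1 := Metric.tendsto_nhds.1 (hrem C1) (ε/2) (by linarith)
  have hsmall2 := Metric.tendsto_nhds.1 (hrem C2) (ε/2) (by linarith)
  filter_upwards [eventually_ge_atTop M, hsmall1, hsmall2, hHn.eventually_gt_atTop 0]
    with x hxM h1 h2 hHx
  rw [Real.dist_eq, sub_zero] at h1 h2
  have hb1 : |C1| ≤ ε / 2 * Hn p a x := by
    rw [abs_div] at h1
    rw [abs_of_pos hHx] at h1
    calc |C1| = |C1| / Hn p a x * Hn p a x := by field_simp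
      _ ≤ ε / 2 * Hn p a x := by apply mul_le_mul_of_nonneg_right h1.le hHx.le
  have hb2 : |C2| ≤ ε / 2 * Hn p a x := by
    rw [abs_div] at h2
    rw [abs_of_pos hHx] at h2
    calc |C2| = |C2| / Hn p a x * Hn p a x := by field_simp
      _ ≤ ε / 2 * Hn p a x := by apply mul_le_mul_of_nonneg_right h2.le hHx.le
  have hA1 : C1 ≤ Hn p a x - (1 - δ) * Fa p a x := mono1 self_mem_Ici hxM hxM
  have hA2 : C2 ≤ (1 + δ) * Fa p a x - Hn p a x := mono2 self_mem_Ici hxM hxM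
  have habs1 := abs_le.1 hb1
  have habs2 := abs_le.1 hb2
  constructor
  · rw [le_div_iff₀ hHx]
    nlinarith [habs2.1, habs2.2]
  · rw [div_le_iff₀ hHx]
    nlinarith [habs1.1, habs1.2]

lemma posA (p a A B T : ℝ) (hp : 1 < p) (hA : 0 < A) (hB : 0 < B) (hT : 0 < T)
    (v : ℝ → ℝ) (hv0 : v 0 = A) (hv0' : deriv v 0 = B)
    (hv : ∀ t ∈ Ico (0:ℝ) T, HasDerivAt v (deriv v t) t)
    (hv' : ∀ t ∈ Ico (0:ℝ) T, HasDerivAt (deriv v) (od p a (v t)) t) :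
    ∀ t ∈ Ico (0:ℝ) T, A ≤ v t := by
  intro t₀ ht₀
  by_cases ht00 : t₀ = 0
  · rw [ht00, hv0]
  have ht0pos : 0 < t₀ := lt_of_le_of_ne ht₀.1 (Ne.symm ht00)
  set S : Set ℝ := {t | t ∈ Icc 0 t₀ ∧ ∀ s ∈ Icc 0 t, A ≤ v s} with hS
  have h0S : (0:ℝ) ∈ S := by
    refine ⟨⟨le_refl 0, ht0pos.le⟩, fun s hs => ?_⟩
    have : s = 0 := le_antisymm hs.2 hs.1
    rw [this, hv0]
  have hbdd : BddAbove S := ⟨t₀, fun x hx => hx.1.2⟩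
  set u := sSup S with hu
  have hu0 : 0 ≤ u := le_csSup hbdd h0S
  have hut0 : u ≤ t₀ := csSup_le ⟨0, h0S⟩ (fun x hx => hx.1.2)
  have huT : u ∈ Ico (0:ℝ) T := ⟨hu0, lt_of_le_of_lt hut0 ht₀.2⟩
  -- every s < u is fine
  have hlt : ∀ s, 0 ≤ s → s < u → A ≤ v s := by
    intro s hs0 hsu
    obtain ⟨x, hxS, hsx⟩ := exists_lt_of_lt_csSup ⟨0, h0S⟩ hsu
    exact hxS.2 s ⟨hs0, hsx.le⟩
  -- u itself is fine
  have hvu : A ≤ v u := by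
    rcases eq_or_lt_of_le hu0 with h | h
    · rw [← h, hv0]
    · have hcont : ContinuousWithinAt v (Ioo 0 u) u := 
        ((hv u huT).continuousAt).continuousWithinAt
      have hne : (𝓝[Ioo (0:ℝ) u] u).NeBot := by
        rw [nhdsWithin_Ioo_eq_nhdsLT h]
        infer_instance
      refine ge_of_tendsto hcont ?_
      filter_upwards [self_mem_nhdsWithin] with s hs
      exact hlt s hs.1.le hs.2
  have huS : u ∈ S := by
    refine ⟨⟨hu0, hut0⟩, fun s hs => ?_⟩
    rcases eq_or_lt_of_le hs.2 with h | h
    · rw [h]; exact hvu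
    · exact hlt s hs.1 h
  -- now show u = t₀
  rcases eq_or_lt_of_le hut0 with h | h
  · rw [← h]; exact hvu
  · exfalso
    -- deriv v is monotone on [0, u], so deriv v u ≥ B
    have hsubT : Icc (0:ℝ) u ⊆ Ico 0 T := fun s hs => ⟨hs.1, lt_of_le_of_lt hs.2 huT.2⟩
    have hmono : MonotoneOn (deriv v) (Icc 0 u) := by
      apply monotoneOn_of_deriv_nonneg (convex_Icc 0 u)
      · exact fun s hs => ((hv' s (hsubT hs)).continuousAt).continuousWithinAt
      · intro s hs
        rw [interior_Icc] at hs
        exact ((hv' s (hsubT (Ioo_subset_Icc_self hs))).differentiableAt).differentiableWithinAt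
      · intro s hs
        rw [interior_Icc] at hs
        rw [(hv' s (hsubT (Ioo_subset_Icc_self hs))).deriv]
        have hvA : A ≤ v s := huS.2 s (Ioo_subset_Icc_self hs)
        exact (od_pos p a (lt_of_lt_of_le hA hvA)).le
    have hdvu : B ≤ deriv v u := by
      rw [← hv0']
      exact hmono ⟨le_refl 0, hu0⟩ ⟨hu0, le_refl u⟩ hu0
    -- continuity of deriv v at u gives positivity nearby
    have hcont : ContinuousAt (deriv v) u := ((hv' u huT).differentiableAt).continuousAt
    obtain ⟨δ, hδ0, hδ⟩ := Metric.continuousAt_iff.1 hcont (B/2) (by linarith)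
    set u' := min t₀ (u + δ/2) with hu'
    have huu' : u < u' := lt_min h (by linarith)
    have hu'T : u' ≤ t₀ := min_le_left _ _
    have hpos : ∀ s ∈ Icc u u', 0 ≤ deriv v s := by
      intro s hs
      have hd : dist s u < δ := by
        rw [Real.dist_eq, abs_of_nonneg (by linarith [hs.1])]
        have : s ≤ u + δ/2 := le_trans hs.2 (min_le_right _ _)
        linarith
      have := hδ hd
      rw [Real.dist_eq] at this
      have := abs_lt.1 this
      linarith [this.1]
    have hsubT2 : Icc u u' ⊆ Ico 0 T :=
      fun s hs => ⟨le_trans hu0 hs.1, lt_of_le_of_lt (hs.2.trans hu'T) ht₀.2⟩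
    have hmono2 : MonotoneOn v (Icc u u') := by
      apply monotoneOn_of_deriv_nonneg (convex_Icc u u')
      · exact fun s hs => ((hv s (hsubT2 hs)).continuousAt).continuousWithinAt
      · intro s hs
        rw [interior_Icc] at hs
        exact ((hv s (hsubT2 (Ioo_subset_Icc_self hs))).differentiableAt).differentiableWithinAt
      · intro s hs
        rw [interior_Icc] at hs
        exact hpos s (Ioo_subset_Icc_self hs)
    have hu'S : u' ∈ S := by
      refine ⟨⟨le_trans hu0 huu'.le, hu'T⟩, fun s hs => ?_⟩
      rcases le_or_gt s u with h' | h'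
      · exact huS.2 s ⟨hs.1, h'⟩
      · calc A ≤ v u := hvu
          _ ≤ v s := hmono2 ⟨le_refl u, huu'.le⟩ ⟨h'.le, hs.2⟩ h'.le
    exact absurd (le_csSup hbdd hu'S) (not_le.2 huu')

lemma posB (p a A B T : ℝ) (hp : 1 < p) (hA : 0 < A) (hB : 0 < B) (hT : 0 < T)
    (v : ℝ → ℝ) (hv0' : deriv v 0 = B)
    (hv' : ∀ t ∈ Ico (0:ℝ) T, HasDerivAt (deriv v) (od p a (v t)) t)
    (hvA : ∀ t ∈ Ico (0:ℝ) T, A ≤ v t) :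
    ∀ t ∈ Ico (0:ℝ) T, B ≤ deriv v t := by
  have hmono : MonotoneOn (deriv v) (Ico 0 T) := by
    apply monotoneOn_of_deriv_nonneg (convex_Ico 0 T)
    · exact fun s hs => ((hv' s hs).continuousAt).continuousWithinAt
    · intro s hs
      rw [interior_Ico] at hs
      exact ((hv' s (Ioo_subset_Ico_self hs)).differentiableAt).differentiableWithinAt
    · intro s hs
      rw [interior_Ico] at hs
      rw [(hv' s (Ioo_subset_Ico_self hs)).deriv]
      exact (od_pos p a (lt_of_lt_of_le hA (hvA s (Ioo_subset_Ico_self hs)))).le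
  intro t ht
  rw [← hv0']
  exact hmono ⟨le_refl 0, hT⟩ ht ht.1

lemma energy (p a A B T : ℝ) (hp : 1 < p) (hA : 0 < A) (hB : 0 < B) (hT : 0 < T)
    (v : ℝ → ℝ) (hv0 : v 0 = A) (hv0' : deriv v 0 = B)
    (hv : ∀ t ∈ Ico (0:ℝ) T, HasDerivAt v (deriv v t) t)
    (hv' : ∀ t ∈ Ico (0:ℝ) T, HasDerivAt (deriv v) (od p a (v t)) t) :
    ∀ t ∈ Ico (0:ℝ) T, (deriv v t) ^ 2 = 2 * Fa p a (v t) + (B ^ 2 - 2 * Fa p a A) := by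
  intro t ht
  set E : ℝ → ℝ := fun s => (deriv v s) ^ 2 / 2 - Fa p a (v s) with hE
  have hkey : ∀ s ∈ Ico (0:ℝ) T, HasDerivAt E 0 s := by
    intro s hs
    have h1 : HasDerivAt (fun s => (deriv v s) ^ 2 / 2) 
        (2 * deriv v s ^ 1 * od p a (v s) / 2) s := ((hv' s hs).pow 2).div_const 2
    have h2 : HasDerivAt (fun s => Fa p a (v s)) (od p a (v s) * deriv v s) s :=
      (hasDerivAt_Fa p a hp (v s)).comp s (hv s hs)
    have := h1.sub h2
    refine this.congr_deriv (Eq.symm ?_)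
    ring
  have hconst := constant_of_has_deriv_right_zero (f := E) (a := 0) (b := t)
    (fun s hs => ((hkey s ⟨hs.1, lt_of_le_of_lt hs.2 ht.2⟩).continuousAt).continuousWithinAt)
    (fun s hs => ((hkey s ⟨hs.1, lt_of_lt_of_le (lt_of_lt_of_le hs.2 ht.2.le) (le_refl T)⟩).hasDerivWithinAt))
  have := hconst t ⟨ht.1, le_refl t⟩
  rw [hE] at this
  simp only [hv0, hv0'] at this
  have h2 : (deriv v t) ^ 2 / 2 - Fa p a (v t) = B ^ 2 / 2 - Fa p a A := this
  linarith

lemma LL_div_log (hdummy : True) : Tendsto (fun y : ℝ => LL y / Real.log y) atTop (𝓝 2) := by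
  have h1 : Tendsto (fun y : ℝ => 1 + 2 / y ^ 2) atTop (𝓝 1) := by
    have : Tendsto (fun y : ℝ => 2 / y ^ 2) atTop (𝓝 0) :=
      Tendsto.div_atTop tendsto_const_nhds (tendsto_pow_atTop (by norm_num))
    simpa using (this.const_add 1)
  have hnum : Tendsto (fun y : ℝ => Real.log (1 + 2 / y ^ 2)) atTop (𝓝 0) := by
    have := (Real.continuousAt_log (x := 1) one_ne_zero).tendsto.comp h1
    simpa [Function.comp_def] using this
  have hq : Tendsto (fun y : ℝ => Real.log (1 + 2 / y ^ 2) / Real.log y) atTop (𝓝 0) :=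
    Tendsto.div_atTop hnum Real.tendsto_log_atTop
  have := hq.const_add 2
  rw [add_zero] at this
  refine this.congr' ?_
  filter_upwards [eventually_gt_atTop (1:ℝ)] with y hy
  have hy0 : (0:ℝ) < y := by linarith
  have hly : 0 < Real.log y := Real.log_pos hy
  have hsq : (0:ℝ) < y ^ 2 := by positivity
  have hfac : (2 + y ^ 2) = y ^ 2 * (1 + 2 / y ^ 2) := by field_simp; ring
  have h12 : (0:ℝ) < 1 + 2 / y ^ 2 := by positivity
  unfold LL
  rw [hfac, Real.log_mul (ne_of_gt hsq) (ne_of_gt h12), Real.log_pow]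
  push_cast
  field_simp

lemma Fa_atTop (p a : ℝ) (hp : 1 < p) : Tendsto (Fa p a) atTop atTop := by
  have h1 := (Fa_div_Hn p a hp).eventually (lt_mem_nhds (show (1:ℝ)/2 < 1 by norm_num))
  have h2 := (Hn_atTop p a hp).eventually_gt_atTop 0
  apply tendsto_atTop_mono' _ _ ((Hn_atTop p a hp).const_mul_atTop (show (0:ℝ) < 1/2 by norm_num))
  filter_upwards [h1, h2] with y hy1 hy2
  rw [lt_div_iff₀ hy2] at hy1
  linarith

lemma vprime_asymp (p a C B : ℝ) (hp : 1 < p) (hB : 0 < B) {l : Filter ℝ} (v : ℝ → ℝ)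
    (hblow : Tendsto v l atTop)
    (hvB : ∀ᶠ t in l, B ≤ deriv v t)
    (hsq : ∀ᶠ t in l, (deriv v t) ^ 2 = 2 * Fa p a (v t) + C) :
    Tendsto (fun t => deriv v t * (v t) ^ (-((p+1)/2)) * Real.log (v t) ^ (-(a/2))) l
      (𝓝 (Real.sqrt ((2:ℝ) ^ ((1:ℝ)+a) / (p+1)))) := by
  have hp1 : (0:ℝ) < p + 1 := by linarith
  have hFv : Tendsto (fun t => Fa p a (v t)) l atTop := (Fa_atTop p a hp).comp hblow
  have hFpos : ∀ᶠ t in l, 0 < Fa p a (v t) := hFv.eventually_gt_atTop 0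
  have hv3 : ∀ᶠ t in l, (3:ℝ) ≤ v t := hblow.eventually_ge_atTop 3
  have hstep1 : Tendsto (fun t => (deriv v t) ^ 2 / (2 * Fa p a (v t))) l (𝓝 1) := by
    have hCz : Tendsto (fun t => C / (2 * Fa p a (v t))) l (𝓝 0) :=
      Tendsto.div_atTop tendsto_const_nhds (hFv.const_mul_atTop two_pos)
    have h := hCz.const_add 1
    rw [add_zero] at h
    refine h.congr' ?_
    filter_upwards [hsq, hFpos] with t h1 h2
    rw [h1]
    field_simp
  have hvd : Tendsto (fun t => deriv v t / Real.sqrt (2 * Fa p a (v t))) l (𝓝 1) := by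
    have hc := (Real.continuous_sqrt.tendsto 1).comp hstep1
    rw [Real.sqrt_one] at hc
    refine hc.congr' ?_
    filter_upwards [hvB, hFpos] with t h1 h2
    have hd : (0:ℝ) < deriv v t := lt_of_lt_of_le hB h1
    simp only [Function.comp_apply]
    rw [Real.sqrt_div (sq_nonneg _), Real.sqrt_sq hd.le]
  have hLv : Tendsto (fun t => LL (v t) / Real.log (v t)) l (𝓝 2) := (LL_div_log trivial).comp hblow
  have hInner : Tendsto (fun t => 2 * Fa p a (v t) / ((v t) ^ (p+1) * Real.log (v t) ^ a)) l
      (𝓝 ((2:ℝ) ^ ((1:ℝ)+a) / (p+1))) := by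
    have hFrat : Tendsto (fun t => Fa p a (v t) / Hn p a (v t)) l (𝓝 1) :=
      (Fa_div_Hn p a hp).comp hblow
    have hpow : Tendsto (fun t => (LL (v t) / Real.log (v t)) ^ a) l (𝓝 ((2:ℝ) ^ a)) := by
      have := ((Real.continuousAt_rpow_const 2 a (Or.inl two_ne_zero)).tendsto).comp hLv
      exact this
    have h := (hFrat.mul hpow).const_mul (2/(p+1))
    have hval : 2/(p+1) * (1 * (2:ℝ)^a) = (2:ℝ)^((1:ℝ)+a)/(p+1) := by
      rw [Real.rpow_add two_pos, Real.rpow_one]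
      ring
    rw [hval] at h
    refine h.congr' ?_
    filter_upwards [hv3] with t h3
    have hvt : (0:ℝ) < v t := by linarith
    have hlt : (1:ℝ) < v t := by linarith
    have hlg : (0:ℝ) < Real.log (v t) := Real.log_pos hlt
    have hLL := logpos (v t)
    have hdr : (LL (v t) / Real.log (v t)) ^ a = LL (v t) ^ a / Real.log (v t) ^ a :=
      Real.div_rpow hLL.le hlg.le a
    rw [hdr]
    unfold Hn
    have e1 : (0:ℝ) < (v t) ^ (p+1) := Real.rpow_pos_of_pos hvt _
    have e2 : (0:ℝ) < LL (v t) ^ a := Real.rpow_pos_of_pos hLL _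
    have e3 : (0:ℝ) < Real.log (v t) ^ a := Real.rpow_pos_of_pos hlg _
    field_simp
  have hsq2 : Tendsto (fun t => Real.sqrt (2 * Fa p a (v t) / ((v t) ^ (p+1) * Real.log (v t) ^ a)))
      l (𝓝 (Real.sqrt ((2:ℝ) ^ ((1:ℝ)+a) / (p+1)))) := (Real.continuous_sqrt.tendsto _).comp hInner
  have h := hvd.mul hsq2
  rw [one_mul] at h
  refine h.congr' ?_
  filter_upwards [hv3, hvB, hFpos] with t h3 hb hF
  have hvt : (0:ℝ) < v t := by linarith
  have hlg : (0:ℝ) < Real.log (v t) := Real.log_pos (by linarith)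
  have hd : (0:ℝ) < deriv v t := lt_of_lt_of_le hB hb
  have h2F : (0:ℝ) < 2 * Fa p a (v t) := by linarith
  have e1 : (0:ℝ) < (v t) ^ ((p+1)/2) := Real.rpow_pos_of_pos hvt _
  have e2 : (0:ℝ) < Real.log (v t) ^ (a/2) := Real.rpow_pos_of_pos hlg _
  have hXsplit : Real.sqrt ((v t) ^ (p+1) * Real.log (v t) ^ a)
      = (v t) ^ ((p+1)/2) * Real.log (v t) ^ (a/2) := by
    rw [Real.sqrt_mul (Real.rpow_pos_of_pos hvt _).le, Real.sqrt_eq_rpow, Real.sqrt_eq_rpow,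
      ← Real.rpow_mul hvt.le, ← Real.rpow_mul hlg.le,
      show (p+1)*(1/2 : ℝ) = (p+1)/2 from by ring, show a*(1/2 : ℝ) = a/2 from by ring]
  have hsq2F : Real.sqrt (2 * Fa p a (v t)) ≠ 0 := (Real.sqrt_pos.2 h2F).ne'
  rw [Real.sqrt_div h2F.le, hXsplit, Real.rpow_neg hvt.le, Real.rpow_neg hlg.le]
  field_simp

lemma integrate_deriv (T : ℝ) (w w' : ℝ → ℝ)
    (hd : ∀ᶠ t in 𝓝[<] T, HasDerivAt w (w' t) t)
    (hw' : Tendsto w' (𝓝[<] T) (𝓝 (-1)))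
    (hw0 : Tendsto w (𝓝[<] T) (𝓝 0)) :
    Tendsto (fun t => w t / (T - t)) (𝓝[<] T) (𝓝 1) := by
  apply squeeze_to_one
  intro ε hε hε1
  have hbnd : ∀ᶠ t in 𝓝[<] T, |w' t + 1| ≤ ε := by
    have := Metric.tendsto_nhds.1 hw' ε hε
    filter_upwards [this] with t ht
    rw [Real.dist_eq, sub_neg_eq_add] at ht
    exact ht.le
  obtain ⟨t₁, ht₁T, hsub⟩ := mem_nhdsLT_iff_exists_Ioo_subset.1
    (eventually_iff.1 (hd.and hbnd))
  have ht₁T' : t₁ < T := ht₁T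
  have hTi : Tendsto (fun s : ℝ => s) (𝓝[<] T) (𝓝 T) :=
    tendsto_id.mono_left nhdsWithin_le_nhds
  have key : ∀ t ∈ Ioo t₁ T, (1 - ε) * (T - t) ≤ w t ∧ w t ≤ (1 + ε) * (T - t) := by
    intro t ht
    have hanti : AntitoneOn (fun s => w s + (1 - ε) * s) (Ioo t₁ T) := by
      apply antitoneOn_of_deriv_nonpos (convex_Ioo t₁ T)
      · intro s hs
        have := (hsub hs).1
        exact (this.add ((hasDerivAt_id s).const_mul (1 - ε))).continuousAt.continuousWithinAt
      · rw [isOpen_Ioo.interior_eq]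
        intro s hs
        exact ((hsub hs).1.add ((hasDerivAt_id s).const_mul (1 - ε))).differentiableAt.differentiableWithinAt
      · rw [isOpen_Ioo.interior_eq]
        intro s hs
        have hds : HasDerivAt (fun s => w s + (1 - ε) * s) (w' s + (1 - ε) * 1) s :=
          (hsub hs).1.add ((hasDerivAt_id s).const_mul (1 - ε))
        rw [hds.deriv]
        have := abs_le.1 (hsub hs).2
        linarith [this.2]
    have hmono : MonotoneOn (fun s => w s + (1 + ε) * s) (Ioo t₁ T) := by
      apply monotoneOn_of_deriv_nonneg (convex_Ioo t₁ T)
      · intro s hs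
        exact ((hsub hs).1.add ((hasDerivAt_id s).const_mul (1 + ε))).continuousAt.continuousWithinAt
      · rw [isOpen_Ioo.interior_eq]
        intro s hs
        exact ((hsub hs).1.add ((hasDerivAt_id s).const_mul (1 + ε))).differentiableAt.differentiableWithinAt
      · rw [isOpen_Ioo.interior_eq]
        intro s hs
        have hds : HasDerivAt (fun s => w s + (1 + ε) * s) (w' s + (1 + ε) * 1) s :=
          (hsub hs).1.add ((hasDerivAt_id s).const_mul (1 + ε))
        rw [hds.deriv]
        have := abs_le.1 (hsub hs).2
        linarith [this.1]
    have hev : ∀ᶠ s in 𝓝[<] T, s ∈ Ioo t T :=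
      eventually_iff.2 (Ioo_mem_nhdsLT_of_mem ⟨ht.2, le_refl T⟩)
    constructor
    · have hF : Tendsto (fun s => w s + (1 - ε) * (s - t)) (𝓝[<] T) (𝓝 (0 + (1 - ε) * (T - t))) :=
        hw0.add ((hTi.sub_const t).const_mul (1 - ε))
      rw [zero_add] at hF
      refine le_of_tendsto hF ?_
      filter_upwards [hev] with s hs
      have h1 := hanti ht ⟨lt_trans ht.1 hs.1, hs.2⟩ hs.1.le
      simp only at h1
      linarith
    · have hF : Tendsto (fun s => w s + (1 + ε) * (s - t)) (𝓝[<] T) (𝓝 (0 + (1 + ε) * (T - t))) :=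
        hw0.add ((hTi.sub_const t).const_mul (1 + ε))
      rw [zero_add] at hF
      refine ge_of_tendsto hF ?_
      filter_upwards [hev] with s hs
      have h1 := hmono ht ⟨lt_trans ht.1 hs.1, hs.2⟩ hs.1.le
      simp only at h1
      linarith
  have hmem : ∀ᶠ t in 𝓝[<] T, t ∈ Ioo t₁ T :=
    eventually_iff.2 (Ioo_mem_nhdsLT_of_mem ⟨ht₁T', le_refl T⟩)
  filter_upwards [hmem] with t ht
  obtain ⟨h1, h2⟩ := key t ht
  have hTt : 0 < T - t := by linarith [ht.2]
  constructor
  · rw [le_div_iff₀ hTt]; linarith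
  · rw [div_le_iff₀ hTt]; linarith

lemma logY_eq {cc V L τ : ℝ} (q' r : ℝ) (hcc : 0 < cc) (hV : 0 < V) (hL : 0 < L) (hτ : 0 < τ) :
    Real.log ((cc * V ^ (-q') * L ^ (-r) / τ)⁻¹)
      = q' * Real.log V + r * Real.log L + Real.log τ - Real.log cc := by
  have h1 : V ^ (-q') ≠ 0 := (Real.rpow_pos_of_pos hV _).ne'
  have h2 : L ^ (-r) ≠ 0 := (Real.rpow_pos_of_pos hL _).ne'
  rw [Real.log_inv, Real.log_div (by positivity) hτ.ne', Real.log_mul (by positivity) h2,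
    Real.log_mul hcc.ne' h1, Real.log_rpow hV, Real.log_rpow hL]
  ring

lemma inversion (p a T cc : ℝ) (hp : 1 < p) (hcc : 0 < cc) (v : ℝ → ℝ)
    (hblow : Tendsto v (𝓝[<] T) atTop)
    (hw : Tendsto (fun t => cc * (v t) ^ (-((p-1)/2)) * Real.log (v t) ^ (-(a/2)) / (T - t))
      (𝓝[<] T) (𝓝 1)) :
    Tendsto (fun t => v t / ((cc ^ (2/(p-1)) * (2/(p-1)) ^ (-(a/(p-1)))) *
      (T - t) ^ (-2/(p-1)) * |Real.log (T - t)| ^ (-a/(p-1)))) (𝓝[<] T) (𝓝 1) := by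
  set l := 𝓝[<] T
  set q' : ℝ := (p-1)/2 with hq'
  set r : ℝ := a/2 with hr
  have hp1 : (0:ℝ) < p - 1 := by linarith
  have hq'0 : 0 < q' := by rw [hq']; linarith
  -- eventual facts
  have hTi : Tendsto (fun s : ℝ => s) l (𝓝 T) := tendsto_id.mono_left nhdsWithin_le_nhds
  have hτ0 : Tendsto (fun t => T - t) l (𝓝 0) := by
    have h : Tendsto (fun t : ℝ => T - t) l (𝓝 (T - T)) := Tendsto.sub tendsto_const_nhds hTi
    simpa using h
  have hev1 : ∀ᶠ t in l, 0 < T - t := by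
    filter_upwards [self_mem_nhdsWithin] with t ht
    exact sub_pos.2 ht
  have hev2 : ∀ᶠ t in l, T - t < 1/2 := hτ0.eventually (gt_mem_nhds (by norm_num))
  have hev3 : ∀ᶠ t in l, (3:ℝ) ≤ v t := hblow.eventually_ge_atTop 3
  -- Y
  set Y : ℝ → ℝ := fun t => (cc * (v t) ^ (-q') * Real.log (v t) ^ (-r) / (T - t))⁻¹ with hY
  have hYlim : Tendsto Y l (𝓝 1) := by
    have := hw.inv₀ one_ne_zero
    rw [inv_one] at this
    exact this
  have hlogY : Tendsto (fun t => Real.log (Y t)) l (𝓝 0) := by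
    have := (Real.continuousAt_log one_ne_zero).tendsto.comp hYlim
    rw [Real.log_one] at this
    exact this
  have hlogv : Tendsto (fun t => Real.log (v t)) l atTop := Real.tendsto_log_atTop.comp hblow
  have hloglog : Tendsto (fun t => Real.log (Real.log (v t)) / Real.log (v t)) l (𝓝 0) :=
    (Real.isLittleO_log_id_atTop.tendsto_div_nhds_zero).comp hlogv
  -- φ → q'
  have hφ : Tendsto (fun t => (-Real.log (T - t)) / Real.log (v t)) l (𝓝 q') := by
    have h3 : Tendsto (fun t => (-Real.log cc - Real.log (Y t)) / Real.log (v t)) l (𝓝 0) :=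
      Tendsto.div_atTop (tendsto_const_nhds.sub hlogY) hlogv
    have hsum := ((hloglog.const_mul r).add h3).const_add q'
    rw [mul_zero, add_zero, add_zero] at hsum
    refine hsum.congr' ?_
    filter_upwards [hev1, hev3] with t h1 h3'
    have hV : (0:ℝ) < v t := by linarith
    have hL : (0:ℝ) < Real.log (v t) := Real.log_pos (by linarith)
    have hlY := logY_eq q' r hcc hV hL h1
    simp only [hY]
    rw [hlY]
    field_simp
    ring
  have hZ : Tendsto (fun t => 2/(p-1) * ((-Real.log (T - t)) / Real.log (v t))) l (𝓝 1) := by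
    have h := hφ.const_mul (2/(p-1))
    have hval : 2/(p-1) * q' = 1 := by rw [hq']; field_simp
    rw [hval] at h
    exact h
  have hZr : Tendsto (fun t => (2/(p-1) * ((-Real.log (T - t)) / Real.log (v t))) ^ r) l (𝓝 1) := by
    have h := (Real.continuousAt_rpow_const 1 r (Or.inl one_ne_zero)).tendsto.comp hZ
    rw [Real.one_rpow] at h
    exact h
  have hG := hYlim.mul hZr
  rw [one_mul] at hG
  have hfin := (Real.continuousAt_rpow_const 1 (2/(p-1)) (Or.inl one_ne_zero)).tendsto.comp hG
  rw [Real.one_rpow] at hfin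
  refine hfin.congr' ?_
  filter_upwards [hev1, hev2, hev3] with t h1 h2 h3
  simp only [Function.comp_apply]
  have hV : (0:ℝ) < v t := by linarith
  have hL : (0:ℝ) < Real.log (v t) := Real.log_pos (by linarith)
  have hlogτ : Real.log (T - t) < 0 := Real.log_neg h1 (by linarith)
  have hm : (0:ℝ) < -Real.log (T - t) := by linarith
  have habs : |Real.log (T - t)| = -Real.log (T - t) := abs_of_neg hlogτ
  have hN : (0:ℝ) < 2/(p-1) * (-Real.log (T - t)) := by positivity
  have hτe : (0:ℝ) < (T - t) ^ (2/(p-1)) := Real.rpow_pos_of_pos h1 _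
  have hme : (0:ℝ) < (-Real.log (T - t)) ^ (a/(p-1)) := Real.rpow_pos_of_pos hm _
  have hPe : (0:ℝ) < (2/(p-1) : ℝ) ^ (a/(p-1)) := Real.rpow_pos_of_pos (by positivity) _
  have hQe : (0:ℝ) < cc ^ (2/(p-1)) := Real.rpow_pos_of_pos hcc _
  have hVq : (0:ℝ) < (v t) ^ q' := Real.rpow_pos_of_pos hV _
  have hLr : (0:ℝ) < Real.log (v t) ^ r := Real.rpow_pos_of_pos hL _
  -- compute Y t
  have hYt : Y t = (v t) ^ q' * Real.log (v t) ^ r * (T - t) / cc := by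
    simp only [hY]
    rw [Real.rpow_neg hV.le, Real.rpow_neg hL.le]
    field_simp
  have hZt : (2/(p-1) * ((-Real.log (T - t)) / Real.log (v t))) ^ r
      = (2/(p-1) * (-Real.log (T - t))) ^ r / Real.log (v t) ^ r := by
    rw [← mul_div_assoc, Real.div_rpow (by positivity) hL.le]
  have hNr : (0:ℝ) < (2/(p-1) * (-Real.log (T - t))) ^ r := Real.rpow_pos_of_pos hN _
  have hprod : Y t * (2/(p-1) * ((-Real.log (T - t)) / Real.log (v t))) ^ r
      = (v t) ^ q' * (T - t) * (2/(p-1) * (-Real.log (T - t))) ^ r / cc := by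
    rw [hYt, hZt]
    field_simp
  rw [hprod]
  -- expand the rpow of the product
  have hexp : ((v t) ^ q' * (T - t) * (2/(p-1) * (-Real.log (T - t))) ^ r / cc) ^ (2/(p-1))
      = ((v t) ^ q') ^ (2/(p-1)) * (T - t) ^ (2/(p-1))
        * ((2/(p-1) * (-Real.log (T - t))) ^ r) ^ (2/(p-1)) / cc ^ (2/(p-1)) := by
    rw [Real.div_rpow (by positivity) hcc.le,
      Real.mul_rpow (by positivity) hNr.le,
      Real.mul_rpow hVq.le h1.le]
  have hVe : ((v t) ^ q') ^ (2/(p-1)) = v t := by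
    rw [← Real.rpow_mul hV.le, show q' * (2/(p-1)) = 1 by rw [hq']; field_simp, Real.rpow_one]
  have hNe : ((2/(p-1) * (-Real.log (T - t))) ^ r) ^ (2/(p-1))
      = (2/(p-1) : ℝ) ^ (a/(p-1)) * (-Real.log (T - t)) ^ (a/(p-1)) := by
    rw [← Real.rpow_mul hN.le, show r * (2/(p-1)) = a/(p-1) by rw [hr]; field_simp,
      Real.mul_rpow (by positivity) hm.le]
  rw [hexp, hVe, hNe, habs]
  rw [show (-2/(p-1) : ℝ) = -(2/(p-1)) by ring, show (-a/(p-1) : ℝ) = -(a/(p-1)) by ring,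
    show (-(a/(p-1)) : ℝ) = -(a/(p-1)) by ring]
  rw [Real.rpow_neg h1.le, Real.rpow_neg hm.le, Real.rpow_neg (by positivity : (0:ℝ) ≤ 2/(p-1))]
  field_simp


lemma kappa_eq (p a : ℝ) (hp : 1 < p) :
    ((2:ℝ) ^ (1 - 2*a) * (p+1) / (p-1) ^ (2-a)) ^ (1/(p-1))
      = (2/(p-1) * Real.sqrt ((p+1)/(2:ℝ) ^ ((1:ℝ)+a))) ^ (2/(p-1))
        * (2/(p-1) : ℝ) ^ (-(a/(p-1))) := by
  have hp1 : (0:ℝ) < p - 1 := by linarith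
  have hp2 : (0:ℝ) < p + 1 := by linarith
  have h2a : (0:ℝ) < (2:ℝ) ^ ((1:ℝ)+a) := Real.rpow_pos_of_pos two_pos _
  have harg : (0:ℝ) < (p+1)/(2:ℝ) ^ ((1:ℝ)+a) := div_pos hp2 h2a
  have hcc : (0:ℝ) < 2/(p-1) * Real.sqrt ((p+1)/(2:ℝ) ^ ((1:ℝ)+a)) :=
    mul_pos (by positivity) (Real.sqrt_pos.2 harg)
  set cc := 2/(p-1) * Real.sqrt ((p+1)/(2:ℝ) ^ ((1:ℝ)+a)) with hccdef
  have e1 : cc ^ (2/(p-1)) = (cc ^ 2) ^ (1/(p-1)) := by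
    calc cc ^ (2/(p-1)) = cc ^ ((2:ℝ) * (1/(p-1))) := by
          rw [show (2/(p-1):ℝ) = (2:ℝ)*(1/(p-1)) from by ring]
      _ = (cc ^ (2:ℝ)) ^ (1/(p-1)) := Real.rpow_mul hcc.le _ _
      _ = (cc ^ 2) ^ (1/(p-1)) := by
          rw [show ((2:ℝ)) = ((2:ℕ):ℝ) from by norm_num, Real.rpow_natCast]
  have e2 : (2/(p-1):ℝ) ^ (-(a/(p-1))) = ((2/(p-1):ℝ) ^ (-a)) ^ (1/(p-1)) := by
    rw [← Real.rpow_mul (by positivity : (0:ℝ) ≤ 2/(p-1))]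
    congr 1
    ring
  rw [e1, e2, ← Real.mul_rpow (by positivity) (Real.rpow_pos_of_pos (by positivity) _).le]
  congr 1
  have hsq : Real.sqrt ((p+1)/(2:ℝ) ^ ((1:ℝ)+a)) ^ 2 = (p+1)/(2:ℝ) ^ ((1:ℝ)+a) :=
    Real.sq_sqrt harg.le
  have hccsq : cc ^ 2 = (2/(p-1))^2 * ((p+1)/(2:ℝ) ^ ((1:ℝ)+a)) := by
    rw [hccdef, mul_pow, hsq]
  set X := (2:ℝ) ^ a with hX
  set Y := (p-1:ℝ) ^ a with hY
  have hX0 : (0:ℝ) < X := Real.rpow_pos_of_pos two_pos _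
  have hY0 : (0:ℝ) < Y := Real.rpow_pos_of_pos hp1 _
  have f1 : (2:ℝ) ^ ((1:ℝ)+a) = 2 * X := by rw [Real.rpow_add two_pos, Real.rpow_one]
  have f2 : (2:ℝ) ^ (1-2*a) = 2 / (X*X) := by
    rw [show (1-2*a:ℝ) = 1 + (-a) + (-a) from by ring, Real.rpow_add two_pos,
      Real.rpow_add two_pos, Real.rpow_one, Real.rpow_neg (by norm_num : (0:ℝ) ≤ 2)]
    rw [← hX]
    field_simp
  have f3 : (p-1:ℝ) ^ (2-a) = (p-1)^2 / Y := by
    rw [show (2-a:ℝ) = ((2:ℕ):ℝ) + (-a) from by push_cast; ring, Real.rpow_add hp1,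
      Real.rpow_natCast, Real.rpow_neg hp1.le, ← hY, div_eq_mul_inv]
  have f4 : (2/(p-1):ℝ) ^ (-a) = Y / X := by
    rw [Real.rpow_neg (by positivity), Real.div_rpow (by norm_num : (0:ℝ) ≤ 2) hp1.le,
      ← hX, ← hY, inv_div]
  rw [f2, f3, hccsq, f1, f4]
  field_simp

end S11

theorem stmt11 (p a A B T : ℝ) (hp : 1 < p) (hA : 0 < A) (hB : 0 < B) (hT : 0 < T)
    (v : ℝ → ℝ) (hv0 : v 0 = A) (hv0' : deriv v 0 = B)
    (hv : ∀ t ∈ Ico (0:ℝ) T, HasDerivAt v (deriv v t) t)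
    (hv' : ∀ t ∈ Ico (0:ℝ) T,
      HasDerivAt (deriv v) (|v t| ^ (p - 1) * v t * (Real.log (2 + (v t) ^ 2)) ^ a) t)
    (hblow : Tendsto v (nhdsWithin T (Iio T)) atTop) :
    Tendsto (fun t : ℝ => v t /
        (((2 : ℝ) ^ (1 - 2 * a) * (p + 1) / (p - 1) ^ (2 - a)) ^ (1 / (p - 1)) *
          (T - t) ^ (-2 / (p - 1)) * |Real.log (T - t)| ^ (-a / (p - 1))))
      (nhdsWithin T (Iio T)) (nhds 1) := by
  have hp1 : (0:ℝ) < p - 1 := by linarith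
  have hp2 : (0:ℝ) < p + 1 := by linarith
  have hv'' : ∀ t ∈ Ico (0:ℝ) T, HasDerivAt (deriv v) (S11.od p a (v t)) t := by
    intro t ht
    simpa [S11.od] using hv' t ht
  have hvA := S11.posA p a A B T hp hA hB hT v hv0 hv0' hv hv''
  have hvB := S11.posB p a A B T hp hA hB hT v hv0' hv'' hvA
  have hE := S11.energy p a A B T hp hA hB hT v hv0 hv0' hv hv''
  have hmem : ∀ᶠ t in nhdsWithin T (Iio T), t ∈ Ico (0:ℝ) T := by
    have h : Ioo (0:ℝ) T ∈ nhdsWithin T (Iio T) :=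
      Ioo_mem_nhdsLT_of_mem ⟨hT, le_refl T⟩
    filter_upwards [h] with t ht
    exact ⟨ht.1.le, ht.2⟩
  have hvBe : ∀ᶠ t in nhdsWithin T (Iio T), B ≤ deriv v t := by
    filter_upwards [hmem] with t ht; exact hvB t ht
  have hsq : ∀ᶠ t in nhdsWithin T (Iio T),
      (deriv v t) ^ 2 = 2 * S11.Fa p a (v t) + (B ^ 2 - 2 * S11.Fa p a A) := by
    filter_upwards [hmem] with t ht; exact hE t ht
  have hR := S11.vprime_asymp p a (B ^ 2 - 2 * S11.Fa p a A) B hp hB v hblow hvBe hsq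
  have h2a : (0:ℝ) < (2:ℝ) ^ ((1:ℝ)+a) := Real.rpow_pos_of_pos two_pos _
  have harg : (0:ℝ) < (p+1)/(2:ℝ) ^ ((1:ℝ)+a) := div_pos hp2 h2a
  have hcc : (0:ℝ) < 2/(p-1) * Real.sqrt ((p+1)/(2:ℝ) ^ ((1:ℝ)+a)) :=
    mul_pos (by positivity) (Real.sqrt_pos.2 harg)
  have hv3 : ∀ᶠ t in nhdsWithin T (Iio T), (3:ℝ) ≤ v t := hblow.eventually_ge_atTop 3
  have hlogv : Tendsto (fun t => Real.log (v t)) (nhdsWithin T (Iio T)) atTop :=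
    Real.tendsto_log_atTop.comp hblow
  have hd : ∀ᶠ t in nhdsWithin T (Iio T),
      HasDerivAt (fun s => 2/(p-1) * Real.sqrt ((p+1)/(2:ℝ) ^ ((1:ℝ)+a))
          * (v s) ^ (-((p-1)/2)) * Real.log (v s) ^ (-(a/2)))
        (2/(p-1) * Real.sqrt ((p+1)/(2:ℝ) ^ ((1:ℝ)+a))
          * (deriv v t * (v t) ^ (-((p+1)/2)) * Real.log (v t) ^ (-(a/2)))
          * (-((p-1)/2) - (a/2)/Real.log (v t))) t := by
    filter_upwards [hmem, hv3] with t ht h3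
    have hvt := hv t ht
    have hV : (0:ℝ) < v t := by linarith
    have hL : (0:ℝ) < Real.log (v t) := Real.log_pos (by linarith)
    have h1 := (Real.hasDerivAt_rpow_const (x := v t) (p := -((p-1)/2)) (Or.inl hV.ne')).comp t hvt
    have h2 := (Real.hasDerivAt_log hV.ne').comp t hvt
    have h3d := (Real.hasDerivAt_rpow_const (x := Real.log (v t)) (p := -(a/2))
      (Or.inl hL.ne')).comp t h2
    have hprod := (h1.const_mul (2/(p-1) * Real.sqrt ((p+1)/(2:ℝ) ^ ((1:ℝ)+a)))).mul h3d
    refine hprod.congr_deriv (Eq.symm ?_)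
    have e1 : (v t) ^ (-((p-1)/2) - 1) = (v t) ^ (-((p+1)/2)) := by
      rw [show (-((p-1)/2) - 1 : ℝ) = -((p+1)/2) from by ring]
    have e2 : (v t) ^ (-((p-1)/2)) * (v t)⁻¹ = (v t) ^ (-((p+1)/2)) := by
      rw [show (v t)⁻¹ = (v t) ^ (-(1:ℝ)) from (Real.rpow_neg_one _).symm,
        ← Real.rpow_add hV, show (-((p-1)/2) + -(1:ℝ)) = -((p+1)/2) from by ring]
    have e3 : Real.log (v t) ^ (-(a/2) - 1)
        = Real.log (v t) ^ (-(a/2)) * (Real.log (v t))⁻¹ := by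
      rw [show (-(a/2) - 1 : ℝ) = -(a/2) + (-1) from by ring, Real.rpow_add hL,
        Real.rpow_neg_one]
    simp only [Function.comp_apply]
    rw [e1, e3, ← e2]
    field_simp
    ring
  have hg : Tendsto (fun t => -((p-1)/2) - (a/2)/Real.log (v t)) (nhdsWithin T (Iio T))
      (𝓝 (-((p-1)/2) - 0)) :=
    tendsto_const_nhds.sub (Tendsto.div_atTop tendsto_const_nhds hlogv)
  have hw'lim : Tendsto (fun t => 2/(p-1) * Real.sqrt ((p+1)/(2:ℝ) ^ ((1:ℝ)+a))
      * (deriv v t * (v t) ^ (-((p+1)/2)) * Real.log (v t) ^ (-(a/2)))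
      * (-((p-1)/2) - (a/2)/Real.log (v t))) (nhdsWithin T (Iio T)) (𝓝 (-1)) := by
    have h := (hR.const_mul (2/(p-1) * Real.sqrt ((p+1)/(2:ℝ) ^ ((1:ℝ)+a)))).mul hg
    have hval : 2/(p-1) * Real.sqrt ((p+1)/(2:ℝ) ^ ((1:ℝ)+a))
        * Real.sqrt ((2:ℝ) ^ ((1:ℝ)+a)/(p+1)) * (-((p-1)/2) - 0) = -1 := by
      rw [mul_assoc (2/(p-1)), ← Real.sqrt_mul harg.le,
        show (p+1)/(2:ℝ) ^ ((1:ℝ)+a) * ((2:ℝ) ^ ((1:ℝ)+a)/(p+1)) = 1 from by field_simp,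
        Real.sqrt_one]
      field_simp
      ring
    rw [hval] at h
    exact h
  have hw0 : Tendsto (fun t => 2/(p-1) * Real.sqrt ((p+1)/(2:ℝ) ^ ((1:ℝ)+a))
      * (v t) ^ (-((p-1)/2)) * Real.log (v t) ^ (-(a/2))) (nhdsWithin T (Iio T)) (𝓝 0) := by
    have h := ((S11.rpow_neg_mul_log_rpow_zero (-(a/2))
      (show (0:ℝ) < (p-1)/2 by linarith)).comp hblow).const_mul
      (2/(p-1) * Real.sqrt ((p+1)/(2:ℝ) ^ ((1:ℝ)+a)))
    rw [mul_zero] at h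
    refine h.congr' ?_
    filter_upwards [] with t
    simp only [Function.comp_apply]
    ring
  have hwT := S11.integrate_deriv T _ _ hd hw'lim hw0
  have hinv := S11.inversion p a T _ hp hcc v hblow hwT
  rw [S11.kappa_eq p a hp]
  exact hinv
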